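/- Let A be a finite index set and for each a ∈ A let w_a : [0,∞) → ℝ be twice differentiable with ẇ_a and ẅ_a bounded on [0,∞), and let θ_a : [0,∞) → ℝ be nonnegative and continuous. Define K(t) := ½ ∑_{a∈A} ẇ_a(t)² and D(t) := ∫₀ᵗ ∑_{a∈A} θ_a(s)·ẇ_a(s)² ds. Assume there exist P > 0 and t̂ ≥ 0 with θ_a(t) ≥ P for all a ∈ A and all t ≥ t̂, and assume K(t) does not tend to 0 as t → ∞ (i.e., there exist τ > 0 and a sequence t_n → ∞ with K(t_n) ≥ τ for all n). Then D(t) → ∞ as t → ∞. -/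

import Mathlib

open MeasureTheory Filter Set

/-- Divergence of the dissipated energy: if the weight velocities and
accelerations are bounded, the joint dissipation factors `θ_a` are nonnegative,
continuous, and bounded below by `P > 0` for large times, and the kinetic
energy `K` does not tend to `0` (witnessed by `τ > 0` along a sequence
`t_n → ∞`), then the dissipated energy `D(t) → ∞`. -/
theorem stmt_13 {ι : Type*} [Fintype ι] (w θ : ι → ℝ → ℝ)
    (hw : ∀ a, Differentiable ℝ (w a))
    (hw' : ∀ a, Differentiable ℝ (deriv (w a)))
    (hwb : ∀ a, ∃ C : ℝ, ∀ t ≥ (0 : ℝ), |deriv (w a) t| ≤ C)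
    (hw2b : ∀ a, ∃ C : ℝ, ∀ t ≥ (0 : ℝ), |deriv (deriv (w a)) t| ≤ C)
    (hθnn : ∀ a, ∀ t ≥ (0 : ℝ), 0 ≤ θ a t)
    (hθc : ∀ a, ContinuousOn (θ a) (Set.Ici 0))
    (P that : ℝ) (hP : 0 < P) (hthat : 0 ≤ that)
    (hθP : ∀ a, ∀ t ≥ that, P ≤ θ a t)
    (τ : ℝ) (hτ : 0 < τ) (tn : ℕ → ℝ)
    (htn : Filter.Tendsto tn Filter.atTop Filter.atTop)
    (hK : ∀ n, τ ≤ (1 / 2) * ∑ a, (deriv (w a) (tn n)) ^ 2) :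
    Filter.Tendsto
      (fun t => ∫ s in (0 : ℝ)..t, ∑ a, θ a s * (deriv (w a) s) ^ 2)
      Filter.atTop Filter.atTop := by
  classical
  set f : ℝ → ℝ := fun s => ∑ a, θ a s * (deriv (w a) s) ^ 2 with hfdef
  have hfc : ContinuousOn f (Ici 0) :=
    continuousOn_finset_sum _ fun a _ =>
      (hθc a).mul (((hw' a).continuous.continuousOn).pow 2)
  have hfnn : ∀ s : ℝ, 0 ≤ s → 0 ≤ f s := fun s hs =>
    Finset.sum_nonneg fun a _ => mul_nonneg (hθnn a s hs) (sq_nonneg _)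
  have hint : ∀ t₁ t₂ : ℝ, 0 ≤ t₁ → t₁ ≤ t₂ → IntervalIntegrable f volume t₁ t₂ := by
    intro t₁ t₂ h1 h12
    refine (hfc.mono fun x hx => ?_).intervalIntegrable
    rw [uIcc_of_le h12] at hx
    exact le_trans h1 hx.1
  choose C hC using hwb
  choose C' hC' using hw2b
  have hCnn : ∀ a, 0 ≤ C a := fun a => (abs_nonneg _).trans (hC a 0 le_rfl)
  have hC'nn : ∀ a, 0 ≤ C' a := fun a => (abs_nonneg _).trans (hC' a 0 le_rfl)
  set L : ℝ := ∑ a, C a * C' a with hLdef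
  -- Lipschitz bound on the kinetic energy
  have hlip : ∀ t ∈ Ici (0:ℝ), ∀ s ∈ Ici (0:ℝ),
      |(1/2) * ∑ a, (deriv (w a) t)^2 - (1/2) * ∑ a, (deriv (w a) s)^2| ≤ L * |t - s| := by
    intro t ht s hs
    have h1 : ∀ a : ι,
        |(1/2)*(deriv (w a) t)^2 - (1/2)*(deriv (w a) s)^2| ≤ C a * C' a * |t - s| := by
      intro a
      have hder : ∀ x ∈ Ici (0:ℝ), HasDerivWithinAt (fun u => (1/2)*(deriv (w a) u)^2)
          (deriv (w a) x * deriv (deriv (w a)) x) (Ici 0) x := by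
        intro x _
        have h := ((hw' a x).hasDerivAt.pow 2).const_mul (1/2 : ℝ)
        have h2 : HasDerivAt (fun u => (1/2)*(deriv (w a) u)^2)
            (deriv (w a) x * deriv (deriv (w a)) x) x := by
          exact h.congr_deriv (by norm_num; ring)
        exact h2.hasDerivWithinAt
      have hbound : ∀ x ∈ Ici (0:ℝ),
          ‖deriv (w a) x * deriv (deriv (w a)) x‖ ≤ C a * C' a := by
        intro x hx
        rw [Real.norm_eq_abs, abs_mul]
        exact mul_le_mul (hC a x hx) (hC' a x hx) (abs_nonneg _) (hCnn a)
      have := (convex_Ici (0:ℝ)).norm_image_sub_le_of_norm_hasDerivWithin_le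
        hder hbound hs ht
      simpa [Real.norm_eq_abs] using this
    calc |(1/2) * ∑ a, (deriv (w a) t)^2 - (1/2) * ∑ a, (deriv (w a) s)^2|
        = |∑ a, ((1/2)*(deriv (w a) t)^2 - (1/2)*(deriv (w a) s)^2)| := by
          rw [Finset.sum_sub_distrib, Finset.mul_sum, Finset.mul_sum]
      _ ≤ ∑ a, |(1/2)*(deriv (w a) t)^2 - (1/2)*(deriv (w a) s)^2| :=
          Finset.abs_sum_le_sum_abs _ _
      _ ≤ ∑ a, C a * C' a * |t - s| := Finset.sum_le_sum fun a _ => h1 a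
      _ = L * |t - s| := by rw [← Finset.sum_mul]
  set L' : ℝ := max L 1 with hL'def
  have hL'pos : (0:ℝ) < L' := lt_of_lt_of_le one_pos (le_max_right _ _)
  have hLL' : L ≤ L' := le_max_left _ _
  set δ : ℝ := τ / (2 * L') with hδdef
  have hδ : 0 < δ := div_pos hτ (by positivity)
  -- each late window contributes at least P*τ*δ
  have key : ∀ n, that ≤ tn n → P * τ * δ ≤ ∫ s in tn n..(tn n + δ), f s := by
    intro n hn
    have h0 : (0:ℝ) ≤ tn n := le_trans hthat hn
    have hlow : ∀ s ∈ Icc (tn n) (tn n + δ), P * τ ≤ f s := by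
      intro s hsI
      have hs0 : (0:ℝ) ≤ s := le_trans h0 hsI.1
      have h1 := hlip s hs0 (tn n) h0
      have habs : |s - tn n| ≤ δ := by
        rw [abs_of_nonneg (by linarith [hsI.1])]; linarith [hsI.2]
      have hLd : L * |s - tn n| ≤ τ/2 := by
        have : L * |s - tn n| ≤ L' * δ :=
          mul_le_mul hLL' habs (abs_nonneg _) (le_of_lt hL'pos)
        have hδτ : L' * δ = τ/2 := by
          rw [hδdef]; field_simp
        linarith
      have hKn := hK n
      have hneg := neg_abs_le ((1/2) * ∑ a, (deriv (w a) s)^2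
          - (1/2) * ∑ a, (deriv (w a) (tn n))^2)
      have hsum : τ ≤ ∑ a, (deriv (w a) s)^2 := by linarith
      have hPle : ∀ a : ι, a ∈ (Finset.univ : Finset ι) →
          P * (deriv (w a) s)^2 ≤ θ a s * (deriv (w a) s)^2 := fun a _ =>
        mul_le_mul_of_nonneg_right (hθP a s (le_trans hn hsI.1)) (sq_nonneg _)
      calc P * τ ≤ P * ∑ a, (deriv (w a) s)^2 :=
            mul_le_mul_of_nonneg_left hsum hP.le
        _ = ∑ a, P * (deriv (w a) s)^2 := Finset.mul_sum _ _ _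
        _ ≤ ∑ a, θ a s * (deriv (w a) s)^2 := Finset.sum_le_sum hPle
    have hci : IntervalIntegrable f volume (tn n) (tn n + δ) :=
      hint _ _ h0 (by linarith)
    have hmon := intervalIntegral.integral_mono_on (by linarith : tn n ≤ tn n + δ)
      intervalIntegrable_const hci hlow
    rw [intervalIntegral.integral_const, smul_eq_mul, add_sub_cancel_left] at hmon
    calc P * τ * δ = δ * (P * τ) := by ring
      _ ≤ _ := hmon
  -- monotonicity of D on [0, ∞)
  have hmono : ∀ t₁ t₂ : ℝ, 0 ≤ t₁ → t₁ ≤ t₂ →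
      (∫ s in (0:ℝ)..t₁, f s) ≤ ∫ s in (0:ℝ)..t₂, f s := by
    intro t₁ t₂ h1 h12
    have hadd := intervalIntegral.integral_add_adjacent_intervals
      (hint 0 t₁ le_rfl h1) (hint t₁ t₂ h1 h12)
    have hpos : 0 ≤ ∫ s in t₁..t₂, f s :=
      intervalIntegral.integral_nonneg h12 fun u hu => hfnn u (le_trans h1 hu.1)
    linarith
  -- D is unbounded
  have grow : ∀ k : ℕ, ∃ T : ℝ, 0 ≤ T ∧ (k : ℝ) * (P * τ * δ) ≤ ∫ s in (0:ℝ)..T, f s := by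
    intro k
    induction k with
    | zero => exact ⟨0, le_rfl, by simp⟩
    | succ k ih =>
      obtain ⟨T, hT0, hT⟩ := ih
      obtain ⟨n, hn⟩ := (htn.eventually_ge_atTop (max T that)).exists
      have hnthat : that ≤ tn n := le_trans (le_max_right _ _) hn
      have hnT : T ≤ tn n := le_trans (le_max_left _ _) hn
      have h0n : (0:ℝ) ≤ tn n := le_trans hthat hnthat
      refine ⟨tn n + δ, by linarith, ?_⟩
      have hadd := intervalIntegral.integral_add_adjacent_intervals
        (hint 0 (tn n) le_rfl h0n) (hint (tn n) (tn n + δ) h0n (by linarith))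
      have h1 := hmono T (tn n) hT0 hnT
      have h2 := key n hnthat
      push_cast
      linarith
  rw [tendsto_atTop]
  intro M
  have hPτδ : 0 < P * τ * δ := by positivity
  obtain ⟨k, hk⟩ := exists_nat_ge (M / (P * τ * δ))
  have hMk : M ≤ (k : ℝ) * (P * τ * δ) := by
    rw [div_le_iff₀ hPτδ] at hk; linarith
  obtain ⟨T, hT0, hT⟩ := grow k
  filter_upwards [eventually_ge_atTop T] with t ht
  exact le_trans hMk (le_trans hT (hmono T t hT0 ht))
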